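/- Let S be an r-dimensional linear subspace of ℝ^d, let L be an (r+j)-dimensional linear subspace of ℝ^d that contains S, and let V be a j-dimensional linear subspace of ℝ^d. Then there exists an orthogonal matrix U ∈ ℝ^{d×d} such that Ux = x for every x ∈ S and Uc ∈ L for every c ∈ V. -/

import Mathlib

open Matrix Module

noncomputable section

lemma aux1 {F : Type*} [NormedAddCommGroup F] [InnerProductSpace ℝ F] [FiniteDimensional ℝ F]
    (A B : Submodule ℝ F) (h : finrank ℝ A ≤ finrank ℝ B) :
    ∃ φ : A →ₗᵢ[ℝ] F, ∀ a : A, φ a ∈ B := by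
  classical
  let bA := stdOrthonormalBasis ℝ A
  let bB := stdOrthonormalBasis ℝ B
  let w : Fin (finrank ℝ A) → F := fun i => (bB (Fin.castLE h i) : F)
  have hw : Orthonormal ℝ w := by
    have h1 : Orthonormal ℝ (fun i : Fin (finrank ℝ B) => (bB i : F)) :=
      bB.orthonormal.comp_linearIsometry B.subtypeₗᵢ
    exact h1.comp _ (Fin.castLE_injective h)
  let f : A →ₗ[ℝ] F := bA.toBasis.constr ℝ w
  have hf : ∀ x, f x = ∑ i, bA.repr x i • w i := by
    intro x
    rw [Basis.constr_apply_fintype]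
    simp only [Basis.equivFun_apply, bA.coe_toBasis_repr_apply]
  refine ⟨f.isometryOfInner ?_, ?_⟩
  · intro x y
    rw [hf, hf, hw.inner_sum]
    have h2 := bA.repr.inner_map_map x y
    rw [← h2, PiLp.inner_apply]
    simp [RCLike.inner_apply]
    exact Finset.sum_congr rfl fun _ _ => mul_comm _ _
  · intro a
    rw [LinearMap.coe_isometryOfInner, hf]
    exact Submodule.sum_mem _ fun i _ => Submodule.smul_mem _ _ (bB (Fin.castLE h i)).2

theorem stmt12 {d r j : ℕ}
    (S L V : Submodule ℝ (Fin d → ℝ))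
    (hS : Module.finrank ℝ S = r) (hL : Module.finrank ℝ L = r + j)
    (hSL : S ≤ L) (hV : Module.finrank ℝ V = j) :
    ∃ U : Matrix (Fin d) (Fin d) ℝ, Uᵀ * U = 1 ∧
      (∀ x ∈ S, U.mulVec x = x) ∧ (∀ c ∈ V, U.mulVec c ∈ L) := by
  classical
  let E := EuclideanSpace ℝ (Fin d)
  let e : E ≃ₗ[ℝ] (Fin d → ℝ) := WithLp.linearEquiv 2 ℝ (Fin d → ℝ)
  let S' : Submodule ℝ E := S.map (e.symm : (Fin d → ℝ) →ₗ[ℝ] E)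
  let L' : Submodule ℝ E := L.map (e.symm : (Fin d → ℝ) →ₗ[ℝ] E)
  let V' : Submodule ℝ E := V.map (e.symm : (Fin d → ℝ) →ₗ[ℝ] E)
  have hS' : finrank ℝ S' = r := (e.symm.finrank_map_eq S).trans hS
  have hL' : finrank ℝ L' = r + j := (e.symm.finrank_map_eq L).trans hL
  have hV' : finrank ℝ V' = j := (e.symm.finrank_map_eq V).trans hV
  have hSL' : S' ≤ L' := Submodule.map_mono hSL
  let K : Submodule ℝ E := S'ᗮ
  let pS : E →L[ℝ] S' := S'.orthogonalProjectionOnto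
  let pK : E →L[ℝ] K := K.orthogonalProjectionOnto
  have hdecomp : ∀ x : E, ((pS x : E) + (pK x : E)) = x := fun x =>
    S'.starProjection_add_starProjection_orthogonal x
  let V'' : Submodule ℝ K := V'.map (pK : E →ₗ[ℝ] K)
  let W : Submodule ℝ E := L' ⊓ K
  let W'' : Submodule ℝ K := W.comap K.subtype
  have hWK : W ≤ K := inf_le_right
  have hsup : S' ⊔ W = L' := by
    apply le_antisymm
    · exact sup_le hSL' inf_le_left
    · intro x hx
      have h1 : (pS x : E) ∈ S' := (pS x).2
      have h2 : (pK x : E) ∈ W := by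
        constructor
        · have h3 : (pK x : E) = x - (pS x : E) := eq_sub_of_add_eq' (hdecomp x)
          rw [h3]
          exact L'.sub_mem hx (hSL' h1)
        · exact (pK x).2
      rw [← hdecomp x]
      exact Submodule.add_mem _ (Submodule.mem_sup_left h1) (Submodule.mem_sup_right h2)
  have hinf : S' ⊓ W = ⊥ := by
    apply le_antisymm
    · intro x hx
      have h1 : x ∈ S' ⊓ S'ᗮ := ⟨hx.1, hx.2.2⟩
      rwa [Submodule.inf_orthogonal_eq_bot] at h1
    · exact bot_le
  have hW : finrank ℝ W = j := by
    have h4 := Submodule.finrank_sup_add_finrank_inf_eq S' W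
    rw [hsup, hinf, hS', hL'] at h4
    simpa using h4.symm
  have hW'' : finrank ℝ W'' = j := by
    rw [← hW]
    exact LinearEquiv.finrank_eq (Submodule.comapSubtypeEquivOfLe hWK)
  have hV'' : finrank ℝ V'' ≤ j := by
    rw [← hV']
    exact Submodule.finrank_map_le _ _
  obtain ⟨φ, hφ⟩ := aux1 V'' W'' (by rw [hW'']; exact hV'')
  let g : K →ₗᵢ[ℝ] K := φ.extend
  let h : E →ₗ[ℝ] E :=
    S'.subtype ∘ₗ (pS : E →ₗ[ℝ] S') + K.subtype ∘ₗ g.toLinearMap ∘ₗ (pK : E →ₗ[ℝ] K)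
  have happly : ∀ x : E, h x = (pS x : E) + (g (pK x) : E) := fun x => rfl
  have hzero : ∀ a b : E, a ∈ S' → b ∈ K → inner ℝ a b = 0 := fun a b ha hb =>
    Submodule.inner_right_of_mem_orthogonal ha hb
  have hinner : ∀ x y : E, inner ℝ (h x) (h y) = inner ℝ x y := by
    intro x y
    rw [happly, happly]
    conv_rhs => rw [← hdecomp x, ← hdecomp y]
    rw [inner_add_left, inner_add_left, inner_add_right, inner_add_right,
      inner_add_right, inner_add_right]
    rw [hzero _ _ (pS x).2 (g (pK y)).2, hzero _ _ (pS x).2 (pK y).2]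
    have c1 : inner ℝ ((g (pK x)) : E) ((pS y : E)) = 0 := by
      rw [real_inner_comm]; exact hzero _ _ (pS y).2 (g (pK x)).2
    have c2 : inner ℝ ((pK x : E)) ((pS y : E)) = 0 := by
      rw [real_inner_comm]; exact hzero _ _ (pS y).2 (pK x).2
    rw [c1, c2]
    have h5 := g.inner_map_map (pK x) (pK y)
    rw [Submodule.coe_inner, Submodule.coe_inner] at h5
    rw [h5]
  have hfix : ∀ x : E, x ∈ S' → h x = x := by
    intro x hx
    have h6 : (pS x : E) = x := Submodule.starProjection_eq_self_iff.mpr hx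
    have h7 : pK x = 0 :=
      Submodule.orthogonalProjectionOnto_apply_of_mem_orthogonal
        (Submodule.le_orthogonal_orthogonal S' hx)
    rw [happly, h6, h7, map_zero]
    simp
  have hmap : ∀ c : E, c ∈ V' → h c ∈ L' := by
    intro c hc
    rw [happly]
    refine L'.add_mem (hSL' (pS c).2) ?_
    have h8 : pK c ∈ V'' := Submodule.mem_map_of_mem hc
    have h9 : g (pK c) = φ ⟨pK c, h8⟩ := φ.extend_apply ⟨pK c, h8⟩
    rw [h9]
    have h10 : φ ⟨pK c, h8⟩ ∈ W'' := hφ _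
    exact (h10 : (φ ⟨pK c, h8⟩ : E) ∈ W).1
  -- translate to a matrix
  let h' : (Fin d → ℝ) →ₗ[ℝ] (Fin d → ℝ)  := e.toLinearMap ∘ₗ h ∘ₗ e.symm.toLinearMap
  have hmul : ∀ x : Fin d → ℝ, (LinearMap.toMatrix' h').mulVec x = e (h (e.symm x)) := by
    intro x
    rw [← Matrix.toLin'_apply, Matrix.toLin'_toMatrix']
    rfl
  refine ⟨LinearMap.toMatrix' h', ?_, ?_, ?_⟩
  · ext i k
    rw [Matrix.mul_apply, Matrix.one_apply]
    have h11 : ∀ a b : Fin d, LinearMap.toMatrix' h' a b = h (WithLp.toLp 2 (Pi.single b 1)) a := by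
      intro a b
      rw [LinearMap.toMatrix'_apply]
      have e : (fun j' => if j' = b then (1:ℝ) else 0) = Pi.single b 1 := by
        ext i'; simp [Pi.single_apply]
      rfl
    simp only [Matrix.transpose_apply]
    have h12 := hinner (WithLp.toLp 2 (Pi.single i 1)) (WithLp.toLp 2 (Pi.single k 1))
    rw [PiLp.inner_apply, PiLp.inner_apply] at h12
    simp only [RCLike.inner_apply, conj_trivial] at h12
    calc ∑ x, LinearMap.toMatrix' h' x i * LinearMap.toMatrix' h' x k = ∑ x, h (WithLp.toLp 2 (Pi.single i 1)) x * h (WithLp.toLp 2 (Pi.single k 1)) x := by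
          simp_rw [h11]
      _ = ∑ x : Fin d, (Pi.single i 1 : Fin d → ℝ) x * (Pi.single k 1 : Fin d → ℝ) x := by simpa only [mul_comm] using h12
      _ = if i = k then 1 else 0 := by
          simp [Pi.single_apply, Finset.sum_ite_eq', eq_comm]
  · intro x hx
    rw [hmul]
    exact (congrArg e (hfix _ (Submodule.mem_map_of_mem hx))).trans (e.apply_symm_apply x)
  · intro c hc
    rw [hmul]
    exact (Submodule.mem_map_equiv L).mp (hmap _ (Submodule.mem_map_of_mem hc))
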